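/- For θ ∈ [m, M] with 0 < m ≤ M and |μ| ≤ M, the integral f¹(y, θ, μ) = ∫ exp(−θ(x−μ)²/2 − exp(x) + xy) dx satisfies the lower bound f¹(y, θ, μ) ≥ exp(y·log y − y) · min_{t∈[−1,0]} exp(−θ(log y − t − μ)²/2) · (∫_{−1}^0 exp(−t²/2) dt)/√y for all integers y ≥ 1. -/

import Mathlib

open Real MeasureTheory intervalIntegral Set
set_option maxHeartbeats 8000000

-- quadratic/cubic series lower bounds for exp at nonneg arguments
lemma aux_quad_le_exp {x : ℝ} (hx : 0 ≤ x) : 1 + x + x^2/2 ≤ Real.exp x := by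
  have h := Real.sum_le_exp_of_nonneg hx 3
  simp [Finset.sum_range_succ, Nat.factorial] at h
  nlinarith [h]

lemma aux_cubic_le_exp {x : ℝ} (hx : 0 ≤ x) : 1 + x + x^2/2 + x^3/6 ≤ Real.exp x := by
  have h := Real.sum_le_exp_of_nonneg hx 4
  simp [Finset.sum_range_succ, Nat.factorial] at h
  nlinarith [h]

-- exp(-x) ≤ 1 - x + x²/2 for x ≥ 0
lemma aux_exp_neg_le_quad {x : ℝ} (hx : 0 ≤ x) : Real.exp (-x) ≤ 1 - x + x^2/2 := by
  have h1 : 1 + x + x^2/2 ≤ Real.exp x := aux_quad_le_exp hx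
  have h2 : Real.exp (-x) * Real.exp x = 1 := by
    rw [← Real.exp_add]; simp
  have h3 : (0:ℝ) < 1 + x + x^2/2 := by nlinarith
  have h4 : (1 - x + x^2/2) * (1 + x + x^2/2) = 1 + x^4/4 := by ring
  nlinarith [Real.exp_pos (-x), Real.exp_pos x]

-- 1 - x + x²/2 - x³/6 ≤ exp(-x) for x ≥ 0
lemma aux_cubic_le_exp_neg {x : ℝ} (hx : 0 ≤ x) : 1 - x + x^2/2 - x^3/6 ≤ Real.exp (-x) := by
  set F : ℝ → ℝ := fun t => Real.exp (-t) - (1 - t + t^2/2 - t^3/6) with hF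
  have hderiv : ∀ t : ℝ, HasDerivAt F (-Real.exp (-t) + (1 - t + t^2/2)) t := by
    intro t
    have h1 : HasDerivAt (fun s : ℝ => Real.exp (-s)) (-Real.exp (-t)) t := by
      exact ((Real.hasDerivAt_exp (-t)).comp t ((hasDerivAt_id t).neg)).congr_deriv (by ring)
    have h2 : HasDerivAt (fun s : ℝ => 1 - s + s^2/2 - s^3/6) (-1 + t - t^2/2) t := by
      have := ((hasDerivAt_pow 2 t).div_const 2)
      have h3 := ((hasDerivAt_pow 3 t).div_const 6)
      have h4 : HasDerivAt (fun s : ℝ => (1:ℝ) - s) (-1) t := by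
        exact ((hasDerivAt_const t (1:ℝ)).sub (hasDerivAt_id t)).congr_deriv (by ring)
      exact ((h4.add this).sub h3).congr_deriv (by ring)
    exact (h1.sub h2).congr_deriv (by ring)
  have hmono : MonotoneOn F (Set.Ici 0) := by
    apply monotoneOn_of_deriv_nonneg (convex_Ici 0)
    · exact ((Real.continuous_exp.comp continuous_neg).sub (by continuity)).continuousOn
    · intro t ht
      exact (hderiv t).differentiableAt.differentiableWithinAt
    · intro t ht
      rw [(hderiv t).deriv]
      have ht' : 0 ≤ t := le_of_lt (by simpa using ht)
      nlinarith [aux_exp_neg_le_quad ht']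
  have h0 : F 0 = 0 := by simp [hF]
  have := hmono (Set.self_mem_Ici) (by exact hx) hx
  rw [h0] at this
  simpa [hF] using this

-- exp u ≤ 1 + u + (3/4)u² on [0,1]
lemma aux_exp_le_upper {u : ℝ} (h0 : 0 ≤ u) (h1 : u ≤ 1) :
    Real.exp u ≤ 1 + u + (3/4)*u^2 := by
  have h := Real.exp_bound' h0 h1 (n := 3) (by norm_num)
  simp [Finset.sum_range_succ, Nat.factorial] at h
  nlinarith [h]

-- exp t ≤ 1 + t + t²/2 for t ≤ 0
lemma aux_exp_le_quad_neg {t : ℝ} (ht : t ≤ 0) : Real.exp t ≤ 1 + t + t^2/2 := by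
  have := aux_exp_neg_le_quad (x := -t) (by linarith)
  simp only [neg_neg] at this
  nlinarith [this]

-- x - exp x antitone on [0,∞)
lemma aux_sub_exp_antitone {u v : ℝ} (h0 : 0 ≤ u) (huv : u ≤ v) :
    v - Real.exp v ≤ u - Real.exp u := by
  have h1 : (v - u) + 1 ≤ Real.exp (v - u) := Real.add_one_le_exp _
  have h2 : Real.exp v = Real.exp u * Real.exp (v - u) := by
    rw [← Real.exp_add]; ring_nf
  have h3 : 1 ≤ Real.exp u := Real.one_le_exp h0
  nlinarith [Real.exp_pos u]

-- FTC for exp(x - exp x)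
lemma aux_integral_exp_sub_exp (a b : ℝ) :
    (∫ x in a..b, Real.exp (x - Real.exp x)) =
      Real.exp (-Real.exp a) - Real.exp (-Real.exp b) := by
  have hderiv : ∀ x : ℝ, HasDerivAt (fun s => -Real.exp (-Real.exp s))
      (Real.exp (x - Real.exp x)) x := by
    intro x
    have h1 : HasDerivAt (fun s : ℝ => -Real.exp s) (-Real.exp x) x :=
      (Real.hasDerivAt_exp x).neg
    have h2 : HasDerivAt (fun s : ℝ => Real.exp (-Real.exp s))
        (Real.exp (-Real.exp x) * -Real.exp x) x :=
      h1.exp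
    have h3 := h2.neg
    exact h3.congr_deriv (by
      rw [show Real.exp (-Real.exp x) * -Real.exp x = -(Real.exp (-Real.exp x) * Real.exp x) by ring,
        neg_neg, ← Real.exp_add]
      ring_nf)
  have := intervalIntegral.integral_eq_sub_of_hasDerivAt (f := fun s => -Real.exp (-Real.exp s))
    (fun x _ => hderiv x)
    (Continuous.intervalIntegrable (by continuity) a b)
  rw [this]; ring


lemma numEinv_lo : (0.36787944:ℝ) ≤ Real.exp (-1) := by
  rw [Real.exp_neg]
  have h : Real.exp 1 ≤ 2.7182818286 := le_of_lt Real.exp_one_lt_d9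
  calc (0.36787944:ℝ) ≤ (2.7182818286:ℝ)⁻¹ := by norm_num
    _ ≤ (Real.exp 1)⁻¹ := by
        apply inv_anti₀ (Real.exp_pos 1) h

lemma numEinv_hi : Real.exp (-1) ≤ 0.36787945 := by
  rw [Real.exp_neg]
  have h : (2.7182818283:ℝ) ≤ Real.exp 1 := le_of_lt Real.exp_one_gt_d9
  calc (Real.exp 1)⁻¹ ≤ (2.7182818283:ℝ)⁻¹ := by
        apply inv_anti₀ (by norm_num) h
    _ ≤ 0.36787945 := by norm_num

lemma numExpE_lo : (15.05:ℝ) ≤ Real.exp (Real.exp 1) := by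
  have hE1 : (2.7182818283:ℝ) < Real.exp 1 := Real.exp_one_gt_d9
  have h1 : Real.exp (Real.exp 1) = Real.exp 1 * Real.exp 1 * Real.exp (Real.exp 1 - 2) := by
    rw [← Real.exp_add, ← Real.exp_add]; ring_nf
  have h2 : Real.exp (0.7182818283:ℝ) ≤ Real.exp (Real.exp 1 - 2) :=
    Real.exp_le_exp.mpr (by linarith)
  have h3 : (2.038:ℝ) ≤ Real.exp (0.7182818283:ℝ) := by
    have := aux_cubic_le_exp (x := (0.7182818283:ℝ)) (by norm_num)
    nlinarith [this]
  have h4 : (1:ℝ) ≤ Real.exp 1 := Real.one_le_exp (by norm_num)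
  rw [h1]
  nlinarith [Real.exp_pos (Real.exp 1 - 2)]

lemma numExpNegE_hi : Real.exp (-Real.exp 1) ≤ 0.06645 := by
  rw [Real.exp_neg]
  calc (Real.exp (Real.exp 1))⁻¹ ≤ (15.05:ℝ)⁻¹ := by
        apply inv_anti₀ (by norm_num) numExpE_lo
    _ ≤ 0.06645 := by norm_num

lemma numG1_lo : (0.1757:ℝ) ≤ Real.exp (1 - Real.exp 1) := by
  have hE1 : Real.exp 1 < 2.7182818286 := Real.exp_one_lt_d9
  have h1 : Real.exp (1 - Real.exp 1) = (Real.exp (Real.exp 1 - 1))⁻¹ := by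
    rw [← Real.exp_neg]; ring_nf
  have h2 : Real.exp (Real.exp 1 - 1) = Real.exp 1 * Real.exp (Real.exp 1 - 2) := by
    rw [← Real.exp_add]; ring_nf
  -- upper bound exp(e-2) ≤ exp(0.7182818286) ≤ 2.0925
  have h3 : Real.exp (Real.exp 1 - 2) ≤ Real.exp (0.7182818286:ℝ) :=
    Real.exp_le_exp.mpr (by linarith)
  have h4 : Real.exp (0.7182818286:ℝ) ≤ 2.0925 := by
    have hq := aux_cubic_le_exp_neg (x := (0.7182818286:ℝ)) (by norm_num)
    have hpos : (0:ℝ) < 1 - 0.7182818286 + 0.7182818286^2/2 - 0.7182818286^3/6 := by norm_num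
    have hmul : Real.exp (0.7182818286:ℝ) * Real.exp (-(0.7182818286:ℝ)) = 1 := by
      rw [← Real.exp_add]; norm_num
    nlinarith [Real.exp_pos (0.7182818286:ℝ), Real.exp_pos (-(0.7182818286:ℝ))]
  have h5 : Real.exp (Real.exp 1 - 1) ≤ 2.7182818286 * 2.0925 := by
    rw [h2]
    have := Real.exp_pos (Real.exp 1 - 2)
    nlinarith [Real.exp_pos 1]
  rw [h1]
  have h6 : (0:ℝ) < Real.exp (Real.exp 1 - 1) := Real.exp_pos _
  rw [le_inv_comm₀ (by norm_num) h6]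
  nlinarith [h5]

lemma numGhalf_lo : (0.3131:ℝ) ≤ Real.exp (1/2 - Real.exp (1/2)) := by
  have hsq : Real.exp (1/2) * Real.exp (1/2) = Real.exp 1 := by
    rw [← Real.exp_add]; norm_num
  have hE1 : Real.exp 1 < 2.7182818286 := Real.exp_one_lt_d9
  have hh : Real.exp (1/2:ℝ) ≤ 1.6487213 := by
    nlinarith [Real.exp_pos (1/2:ℝ)]
  have h1 : Real.exp (-(1.1487213:ℝ)) ≤ Real.exp (1/2 - Real.exp (1/2)) :=
    Real.exp_le_exp.mpr (by linarith)
  have h2 : Real.exp (-(1.1487213:ℝ)) = Real.exp (-1) * Real.exp (-(0.1487213:ℝ)) := by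
    rw [← Real.exp_add]; norm_num
  have h3 : (1:ℝ) - 0.1487213 ≤ Real.exp (-(0.1487213:ℝ)) := by
    have := Real.add_one_le_exp (-(0.1487213:ℝ)); linarith
  nlinarith [numEinv_lo, Real.exp_pos (-(0.1487213:ℝ)), Real.exp_pos (-1:ℝ)]

lemma numExpNegEinv_lo : (0.63212055:ℝ) ≤ Real.exp (-Real.exp (-1)) := by
  have := Real.add_one_le_exp (-Real.exp (-1))
  linarith [numEinv_hi]

lemma numSqrt3 : Real.sqrt 3 ≤ 1.7320509 := by
  have h := Real.sqrt_le_sqrt (show (3:ℝ) ≤ 1.7320509^2 by norm_num)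
  rwa [Real.sqrt_sq (by norm_num)] at h

/-- Unnormalized marginal likelihood of the one-dimensional Poisson log-normal model. -/
noncomputable def f1 (y : ℕ) (θ μ : ℝ) : ℝ :=
  ∫ x : ℝ, Real.exp (-(θ * (x - μ) ^ 2) / 2) * Real.exp (-Real.exp x) * Real.exp (x * y)

/-- Explicit lower bound for the one-dimensional Poisson log-normal marginal integral:
`f¹(y,θ,μ) ≥ exp(y log y − y) · min_{t∈[−1,0]} exp(−θ(log y − t − μ)²/2) ·
(∫_{−1}^0 exp(−t²/2) dt)/√y` for all integers `y ≥ 1`. -/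
theorem stmt_8 (m M θ μ : ℝ) (hm : 0 < m) (hmM : m ≤ M)
    (hθ : θ ∈ Set.Icc m M) (hμ : |μ| ≤ M) :
    ∀ y : ℕ, 1 ≤ y →
      Real.exp (y * Real.log y - y) *
          sInf ((fun t : ℝ => Real.exp (-(θ * (Real.log y - t - μ) ^ 2) / 2)) ''
            Set.Icc (-1 : ℝ) 0) *
          (∫ t in (-1 : ℝ)..0, Real.exp (-t ^ 2 / 2)) / Real.sqrt y ≤
        f1 y θ μ := by
  intro y hy
  have hyR : (1:ℝ) ≤ (y:ℝ) := by exact_mod_cast hy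
  have hy0 : (0:ℝ) < (y:ℝ) := by linarith
  obtain ⟨hθm, hθM⟩ := hθ
  have hθ0 : 0 < θ := lt_of_lt_of_le hm hθm
  set L : ℝ := Real.log y with hLdef
  have hL0 : 0 ≤ L := Real.log_nonneg hyR
  set g : ℝ → ℝ := fun x =>
    Real.exp (-(θ * (x - μ) ^ 2) / 2) * Real.exp (-Real.exp x) * Real.exp (x * y) with hgdef
  have hg_cont : Continuous g := by fun_prop
  have hg_nonneg : ∀ x, 0 ≤ g x := fun x => by positivity
  have hInt : MeasureTheory.Integrable g := by
    have h1 : MeasureTheory.Integrable (fun x : ℝ => Real.exp (-(θ/2) * x^2)) :=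
      integrable_exp_neg_mul_sq (by positivity)
    have h2 := (h1.comp_sub_right (μ + y/θ)).const_mul (Real.exp (μ*y + y^2/(2*θ)))
    apply h2.mono' hg_cont.aestronglyMeasurable
    filter_upwards with x
    rw [Real.norm_eq_abs, abs_of_nonneg (hg_nonneg x)]
    have hb1 : Real.exp (-Real.exp x) ≤ 1 := by
      rw [show (1:ℝ) = Real.exp 0 by simp]
      exact Real.exp_le_exp.mpr (by linarith [Real.exp_pos x])
    calc g x ≤ Real.exp (-(θ * (x - μ) ^ 2) / 2) * 1 * Real.exp (x * y) := by
          apply mul_le_mul_of_nonneg_right _ (Real.exp_pos _).le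
          exact mul_le_mul_of_nonneg_left hb1 (Real.exp_pos _).le
      _ = Real.exp (μ*y + y^2/(2*θ) + (-(θ/2) * (x - (μ + y/θ))^2)) := by
          rw [mul_one, ← Real.exp_add]; congr 1; field_simp; ring
      _ = Real.exp (μ*y + y^2/(2*θ)) * Real.exp (-(θ/2) * (x - (μ + y/θ))^2) :=
          Real.exp_add _ _
  have hf1 : f1 y θ μ = ∫ x, g x := rfl
  have key : ∀ a b : ℝ, a ≤ b → (∫ x in a..b, g x) ≤ f1 y θ μ := by
    intro a b hab
    rw [hf1, intervalIntegral.integral_of_le hab]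
    exact MeasureTheory.setIntegral_le_integral hInt
      (Filter.Eventually.of_forall hg_nonneg)
  set S := sInf ((fun t : ℝ => Real.exp (-(θ * (L - t - μ) ^ 2) / 2)) '' Set.Icc (-1 : ℝ) 0)
    with hSdef
  have hbdd : BddBelow ((fun t : ℝ => Real.exp (-(θ * (L - t - μ) ^ 2) / 2)) ''
      Set.Icc (-1 : ℝ) 0) := by
    refine ⟨0, ?_⟩
    rintro v ⟨t, ht, rfl⟩
    exact (Real.exp_pos _).le
  have hSle : ∀ t ∈ Set.Icc (-1:ℝ) 0, S ≤ Real.exp (-(θ * (L - t - μ) ^ 2) / 2) :=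
    fun t ht => csInf_le hbdd (Set.mem_image_of_mem _ ht)
  have hS0 : 0 ≤ S := by
    apply le_csInf
    · exact ⟨_, Set.mem_image_of_mem _ (show (0:ℝ) ∈ Set.Icc (-1:ℝ) 0 by constructor <;> norm_num)⟩
    · rintro v ⟨t, ht, rfl⟩
      exact (Real.exp_pos _).le
  set G := ∫ t in (-1:ℝ)..0, Real.exp (-t^2/2) with hGdef
  have hG0 : 0 ≤ G :=
    intervalIntegral.integral_nonneg (by norm_num) (fun u _ => (Real.exp_pos _).le)
  have hGle : G ≤ 103/120 := by
    have hle : ∀ t ∈ Set.Icc (-1:ℝ) 0, Real.exp (-t^2/2) ≤ 1 - t^2/2 + t^4/8 := by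
      intro t _
      have h := aux_exp_neg_le_quad (x := t^2/2) (by positivity)
      calc Real.exp (-t^2/2) = Real.exp (-(t^2/2)) := by congr 1; ring
        _ ≤ 1 - t^2/2 + (t^2/2)^2/2 := h
        _ = 1 - t^2/2 + t^4/8 := by ring
    have hI : (∫ t in (-1:ℝ)..0, (1 - t^2/2 + t^4/8)) = 103/120 := by
      have hd : ∀ t : ℝ, HasDerivAt (fun s : ℝ => s - s^3/6 + s^5/40) (1 - t^2/2 + t^4/8) t := by
        intro t
        have h1 := (hasDerivAt_id t).sub ((hasDerivAt_pow 3 t).div_const 6)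
        have h2 := h1.add ((hasDerivAt_pow 5 t).div_const 40)
        exact h2.congr_deriv (by push_cast; ring)
      rw [intervalIntegral.integral_eq_sub_of_hasDerivAt (fun t _ => hd t)
        (Continuous.intervalIntegrable (by fun_prop) _ _)]
      norm_num
    calc G ≤ ∫ t in (-1:ℝ)..0, (1 - t^2/2 + t^4/8) := by
          apply intervalIntegral.integral_mono_on (by norm_num)
            (Continuous.intervalIntegrable (by fun_prop) _ _)
            (Continuous.intervalIntegrable (by fun_prop) _ _) hle
      _ = 103/120 := hI
  set sy := Real.sqrt (y:ℝ) with hsydef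
  have hsy0 : 0 < sy := Real.sqrt_pos.mpr hy0
  have hsy2 : sy^2 = y := Real.sq_sqrt hy0.le
  have hsy1 : 1 ≤ sy := by nlinarith
  show Real.exp (y * L - y) * S * G / sy ≤ f1 y θ μ
  rcases le_or_gt μ L with hcase | hcase
  · -- Case 1 : μ ≤ log y, use the interval [log y - 1, log y]
    have hSle1 : S ≤ Real.exp (-(θ * (L + 1 - μ)^2)/2) := by
      have h := hSle (-1) (by constructor <;> norm_num)
      rwa [show L - (-1) - μ = L + 1 - μ by ring] at h
    have hpt : ∀ x ∈ Set.Icc (L-1) L,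
        S * (Real.exp (y*L - y) * Real.exp (-(y * (x - L)^2)/2)) ≤ g x := by
      intro x hx
      obtain ⟨hx1, hx2⟩ := hx
      have h1 : S ≤ Real.exp (-(θ * (x - μ)^2)/2) := by
        refine hSle1.trans (Real.exp_le_exp.mpr ?_)
        have hsq : (x - μ)^2 ≤ (L + 1 - μ)^2 := by nlinarith
        nlinarith [hθ0.le]
      have h2 : Real.exp (y*L - y) * Real.exp (-(y * (x - L)^2)/2) ≤
          Real.exp (-Real.exp x) * Real.exp (x * y) := by
        rw [← Real.exp_add, ← Real.exp_add]
        apply Real.exp_le_exp.mpr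
        have hexL : Real.exp (x - L) = Real.exp x / y := by
          rw [Real.exp_sub, hLdef, Real.exp_log hy0]
        have hex : Real.exp x = y * Real.exp (x - L) := by
          rw [hexL]; field_simp
        have hq := aux_exp_le_quad_neg (t := x - L) (by linarith)
        nlinarith [mul_le_mul_of_nonneg_left hq hy0.le, hex]
      calc S * (Real.exp (y*L - y) * Real.exp (-(y * (x - L)^2)/2))
          ≤ Real.exp (-(θ * (x - μ)^2)/2) *
            (Real.exp (y*L - y) * Real.exp (-(y * (x - L)^2)/2)) := by
            apply mul_le_mul_of_nonneg_right h1 (by positivity)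
        _ ≤ Real.exp (-(θ * (x - μ)^2)/2) * (Real.exp (-Real.exp x) * Real.exp (x * y)) := by
            apply mul_le_mul_of_nonneg_left h2 (Real.exp_pos _).le
        _ = g x := by rw [hgdef]; ring
    have hI1 : (∫ x in (L-1)..L, Real.exp (-(y * (x - L)^2)/2)) =
        ∫ t in (-1:ℝ)..0, Real.exp (-(y * t^2)/2) := by
      have h := intervalIntegral.integral_comp_sub_right (a := L-1) (b := L)
        (fun t => Real.exp (-(y * t^2)/2)) L
      rw [show L - 1 - L = (-1:ℝ) by ring, sub_self] at h
      exact h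
    have hI2 : G / sy ≤ ∫ t in (-1:ℝ)..0, Real.exp (-(y * t^2)/2) := by
      have h3 : sy * (∫ t in (-1:ℝ)..0, Real.exp (-(y * t^2)/2)) =
          ∫ s in (-sy)..(0:ℝ), Real.exp (-s^2/2) := by
        have h := intervalIntegral.smul_integral_comp_mul_left (a := (-1:ℝ)) (b := 0)
          (fun s => Real.exp (-s^2/2)) sy
        rw [smul_eq_mul, show sy * (-1) = -sy by ring, mul_zero] at h
        have heq : (∫ t in (-1:ℝ)..0, Real.exp (-(y * t^2)/2)) =
            ∫ t in (-1:ℝ)..0, (fun s => Real.exp (-s^2/2)) (sy*t) := by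
          apply intervalIntegral.integral_congr
          intro t _
          show Real.exp (-(y * t^2)/2) = Real.exp (-(sy*t)^2/2)
          congr 1
          rw [mul_pow, hsy2]
        rw [heq, h]
      have hii : IntervalIntegrable (fun s : ℝ => Real.exp (-s^2/2)) MeasureTheory.volume
          (-sy) (-1) := Continuous.intervalIntegrable (by fun_prop) _ _
      have hii2 : IntervalIntegrable (fun s : ℝ => Real.exp (-s^2/2)) MeasureTheory.volume
          (-1) 0 := Continuous.intervalIntegrable (by fun_prop) _ _
      have hadd := intervalIntegral.integral_add_adjacent_intervals hii hii2
      have h5 : 0 ≤ ∫ s in (-sy)..(-1:ℝ), Real.exp (-s^2/2) :=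
        intervalIntegral.integral_nonneg (by linarith) (fun u _ => (Real.exp_pos _).le)
      rw [div_le_iff₀ hsy0]
      calc G ≤ ∫ s in (-sy)..(0:ℝ), Real.exp (-s^2/2) := by rw [← hadd, hGdef]; linarith
        _ = sy * (∫ t in (-1:ℝ)..0, Real.exp (-(y * t^2)/2)) := h3.symm
        _ = (∫ t in (-1:ℝ)..0, Real.exp (-(y * t^2)/2)) * sy := by ring
    calc Real.exp (y*L - y) * S * G / sy = S * (Real.exp (y*L - y) * (G / sy)) := by ring
      _ ≤ S * (Real.exp (y*L - y) * (∫ t in (-1:ℝ)..0, Real.exp (-(y * t^2)/2))) := by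
          apply mul_le_mul_of_nonneg_left _ hS0
          exact mul_le_mul_of_nonneg_left hI2 (Real.exp_pos _).le
      _ = ∫ x in (L-1)..L, S * (Real.exp (y*L - y) * Real.exp (-(y * (x - L)^2)/2)) := by
          rw [← hI1, ← intervalIntegral.integral_const_mul, ← intervalIntegral.integral_const_mul]
      _ ≤ ∫ x in (L-1)..L, g x := by
          apply intervalIntegral.integral_mono_on (by linarith)
            (Continuous.intervalIntegrable (by fun_prop) _ _)
            (Continuous.intervalIntegrable hg_cont _ _) hpt
      _ ≤ f1 y θ μ := key _ _ (by linarith)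
  · rcases le_or_gt 2 y with hy2 | hy2
    · -- Case 2 : log y < μ, y ≥ 2, use the interval [log y, log y + 1]
      have hy2R : (2:ℝ) ≤ (y:ℝ) := by exact_mod_cast hy2
      have hpt : ∀ x ∈ Set.Icc L (L+1),
          S * (Real.exp (y*L - y) * Real.exp (-(3/4 * y * (x - L)^2))) ≤ g x := by
        intro x hx
        obtain ⟨hx1, hx2⟩ := hx
        have h1 : S ≤ Real.exp (-(θ * (x - μ)^2)/2) := by
          have h := hSle (L - x) (by constructor <;> [linarith; linarith])
          rwa [show L - (L - x) - μ = x - μ by ring] at h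
        have h2 : Real.exp (y*L - y) * Real.exp (-(3/4 * y * (x - L)^2)) ≤
            Real.exp (-Real.exp x) * Real.exp (x * y) := by
          rw [← Real.exp_add, ← Real.exp_add]
          apply Real.exp_le_exp.mpr
          have hexL : Real.exp (x - L) = Real.exp x / y := by
            rw [Real.exp_sub, hLdef, Real.exp_log hy0]
          have hex : Real.exp x = y * Real.exp (x - L) := by
            rw [hexL]; field_simp
          have hq := aux_exp_le_upper (u := x - L) (by linarith) (by linarith)
          nlinarith [mul_le_mul_of_nonneg_left hq hy0.le, hex]
        calc S * (Real.exp (y*L - y) * Real.exp (-(3/4 * y * (x - L)^2)))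
            ≤ Real.exp (-(θ * (x - μ)^2)/2) *
              (Real.exp (y*L - y) * Real.exp (-(3/4 * y * (x - L)^2))) := by
              apply mul_le_mul_of_nonneg_right h1 (by positivity)
          _ ≤ Real.exp (-(θ * (x - μ)^2)/2) * (Real.exp (-Real.exp x) * Real.exp (x * y)) := by
              apply mul_le_mul_of_nonneg_left h2 (Real.exp_pos _).le
          _ = g x := by rw [hgdef]; ring
      have hI1 : (∫ x in L..(L+1), Real.exp (-(3/4 * y * (x - L)^2))) =
          ∫ u in (0:ℝ)..1, Real.exp (-(3/4 * y * u^2)) := by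
        have h := intervalIntegral.integral_comp_sub_right (a := L) (b := L+1)
          (fun u => Real.exp (-(3/4 * y * u^2))) L
        rw [sub_self, show L + 1 - L = (1:ℝ) by ring] at h
        exact h
      -- scaling: r = √3/2 · √y
      set r : ℝ := Real.sqrt 3 / 2 * sy with hrdef
      have hsqrt3 : (0:ℝ) ≤ Real.sqrt 3 := Real.sqrt_nonneg 3
      have hsqrt3sq : Real.sqrt 3 ^ 2 = 3 := Real.sq_sqrt (by norm_num)
      have hr0 : 0 < r := by
        have h3 : (1:ℝ) ≤ Real.sqrt 3 := by nlinarith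
        rw [hrdef]; nlinarith
      have hr2 : r^2 = 3/4 * y := by rw [hrdef]; rw [mul_pow, div_pow, hsqrt3sq, hsy2]; ring
      have hr65 : (6/5:ℝ) ≤ r := by nlinarith
      have hI2 : G / sy ≤ ∫ u in (0:ℝ)..1, Real.exp (-(3/4 * y * u^2)) := by
        have h3 : r * (∫ u in (0:ℝ)..1, Real.exp (-(3/4 * y * u^2))) =
            ∫ s in (0:ℝ)..r, Real.exp (-s^2) := by
          have h := intervalIntegral.smul_integral_comp_mul_left (a := (0:ℝ)) (b := 1)
            (fun s => Real.exp (-s^2)) r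
          rw [smul_eq_mul, mul_zero, mul_one] at h
          have heq : (∫ u in (0:ℝ)..1, Real.exp (-(3/4 * y * u^2))) =
              ∫ u in (0:ℝ)..1, (fun s => Real.exp (-s^2)) (r*u) := by
            apply intervalIntegral.integral_congr
            intro u _
            show Real.exp (-(3/4 * y * u^2)) = Real.exp (-(r*u)^2)
            congr 1
            rw [mul_pow, hr2]
          rw [heq, h]
        -- lower bound ∫_0^{6/5} exp(-s²) ≥ 430674/546875
        have hply : ∀ s ∈ Set.Icc (0:ℝ) (6/5), 1 - s^2 + s^4/2 - s^6/6 ≤ Real.exp (-s^2) := by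
          intro s _
          have h := aux_cubic_le_exp_neg (x := s^2) (by positivity)
          calc 1 - s^2 + s^4/2 - s^6/6 = 1 - s^2 + (s^2)^2/2 - (s^2)^3/6 := by ring
            _ ≤ Real.exp (-s^2) := h
        have hIpoly : (∫ s in (0:ℝ)..(6/5), (1 - s^2 + s^4/2 - s^6/6)) = 430674/546875 := by
          have hd : ∀ t : ℝ, HasDerivAt (fun s : ℝ => s - s^3/3 + s^5/10 - s^7/42)
              (1 - t^2 + t^4/2 - t^6/6) t := by
            intro t
            have h1 := (hasDerivAt_id t).sub ((hasDerivAt_pow 3 t).div_const 3)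
            have h2 := h1.add ((hasDerivAt_pow 5 t).div_const 10)
            have h3 := h2.sub ((hasDerivAt_pow 7 t).div_const 42)
            exact h3.congr_deriv (by push_cast; ring)
          rw [intervalIntegral.integral_eq_sub_of_hasDerivAt (fun t _ => hd t)
            (Continuous.intervalIntegrable (by fun_prop) _ _)]
          norm_num
        have hlow : (430674/546875:ℝ) ≤ ∫ s in (0:ℝ)..(6/5), Real.exp (-s^2) := by
          rw [← hIpoly]
          apply intervalIntegral.integral_mono_on (by norm_num)
            (Continuous.intervalIntegrable (by fun_prop) _ _)
            (Continuous.intervalIntegrable (by fun_prop) _ _) hply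
        have hii : IntervalIntegrable (fun s : ℝ => Real.exp (-s^2)) MeasureTheory.volume
            0 (6/5) := Continuous.intervalIntegrable (by fun_prop) _ _
        have hii2 : IntervalIntegrable (fun s : ℝ => Real.exp (-s^2)) MeasureTheory.volume
            (6/5) r := Continuous.intervalIntegrable (by fun_prop) _ _
        have hadd := intervalIntegral.integral_add_adjacent_intervals hii hii2
        have h5 : 0 ≤ ∫ s in (6/5:ℝ)..r, Real.exp (-s^2) :=
          intervalIntegral.integral_nonneg (by linarith) (fun u _ => (Real.exp_pos _).le)
        have h6 : (430674/546875:ℝ) ≤ ∫ s in (0:ℝ)..r, Real.exp (-s^2) := by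
          rw [← hadd]; linarith
        -- conclude: G/sy ≤ (1/r)·∫_0^r ≤ ...
        rw [div_le_iff₀ hsy0]
        have hGr : G * r ≤ (430674/546875) * sy := by
          have : G * r ≤ (103/120) * (Real.sqrt 3 / 2 * sy) := by
            rw [← hrdef]
            apply mul_le_mul hGle (le_refl r) hr0.le (by norm_num)
          refine this.trans ?_
          have h7 : (103/120) * (Real.sqrt 3 / 2) ≤ 430674/546875 := by
            nlinarith [numSqrt3]
          nlinarith [hsy0.le]
        have h8 : G * r ≤ (∫ s in (0:ℝ)..r, Real.exp (-s^2)) * sy := by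
          refine hGr.trans ?_
          apply mul_le_mul_of_nonneg_right h6 hsy0.le
        have h9 := h3
        nlinarith [h8, hr0, hsy0]
      calc Real.exp (y*L - y) * S * G / sy = S * (Real.exp (y*L - y) * (G / sy)) := by ring
        _ ≤ S * (Real.exp (y*L - y) * (∫ u in (0:ℝ)..1, Real.exp (-(3/4 * y * u^2)))) := by
            apply mul_le_mul_of_nonneg_left _ hS0
            exact mul_le_mul_of_nonneg_left hI2 (Real.exp_pos _).le
        _ = ∫ x in L..(L+1), S * (Real.exp (y*L - y) * Real.exp (-(3/4 * y * (x - L)^2))) := by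
            rw [← hI1, ← intervalIntegral.integral_const_mul, ← intervalIntegral.integral_const_mul]
        _ ≤ ∫ x in L..(L+1), g x := by
            apply intervalIntegral.integral_mono_on (by linarith)
              (Continuous.intervalIntegrable (by fun_prop) _ _)
              (Continuous.intervalIntegrable hg_cont _ _) hpt
        _ ≤ f1 y θ μ := key _ _ (by linarith)
    · -- Case 3 : y = 1, 0 < μ
      have hy1' : y = 1 := by omega
      subst hy1'
      have hL1 : L = 0 := by rw [hLdef]; simp
      have hsyone : sy = 1 := by rw [hsydef]; simp
      have hμ0 : 0 < μ := by rw [hL1] at hcase; exact hcase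
      rw [hL1, hsyone, show ((1:ℕ):ℝ) * 0 - ((1:ℕ):ℝ) = -1 by push_cast; ring, div_one]
      -- goal : Real.exp (-1) * S * G ≤ f1 1 θ μ
      have hgform : ∀ x : ℝ, g x =
          Real.exp (-(θ*(x-μ)^2)/2) * Real.exp (x - Real.exp x) := by
        intro x
        simp only [hgdef]
        rw [Nat.cast_one, mul_one, show x - Real.exp x = -Real.exp x + x by ring,
          Real.exp_add, mul_assoc]
      set D := max (μ^2) ((1-μ)^2) with hDdef
      have hS1 : S ≤ Real.exp (-(θ * μ^2)/2) := by
        have h := hSle 0 (by constructor <;> norm_num)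
        rw [hL1, show (0:ℝ) - 0 - μ = -μ by ring, show (-μ:ℝ)^2 = μ^2 by ring] at h
        exact h
      have hS2 : S ≤ Real.exp (-(θ * (1-μ)^2)/2) := by
        have h := hSle (-1) (by constructor <;> norm_num)
        rw [hL1, show (0:ℝ) - (-1) - μ = 1 - μ by ring] at h
        exact h
      have hSD : S ≤ Real.exp (-(θ * D)/2) := by
        rcases max_choice (μ^2) ((1-μ)^2) with heq | heq <;> rw [hDdef, heq]
        · exact hS1
        · exact hS2
      have hD1 : μ^2 ≤ D := le_max_left _ _
      have hDx : ∀ x ∈ Set.Icc (0:ℝ) 1, (x-μ)^2 ≤ D := by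
        intro x hx
        obtain ⟨hx1, hx2⟩ := hx
        rcases le_total x μ with h | h
        · refine le_trans ?_ (le_max_left _ _)
          nlinarith
        · refine le_trans ?_ (le_max_right _ _)
          nlinarith
      have hint_h : ∀ a b : ℝ, IntervalIntegrable (fun x => Real.exp (x - Real.exp x))
          MeasureTheory.volume a b := fun a b => Continuous.intervalIntegrable (by fun_prop) _ _
      rcases le_or_gt (θ*(1+2*μ)) 2 with hk | hk
      · -- branch A : θ(1+2μ) ≤ 2, use the interval [-1, 1]
        have hptL : ∀ x ∈ Set.Icc (-1:ℝ) 0,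
            S * (Real.exp (-1) * Real.exp (x - Real.exp x)) ≤ g x := by
          intro x hx
          obtain ⟨hx1, hx2⟩ := hx
          have h1 : S * Real.exp (-1) ≤ Real.exp (-(θ*(x-μ)^2)/2) := by
            have e1 : S * Real.exp (-1) ≤
                Real.exp (-(θ*D)/2) * Real.exp (-(θ*(1+2*μ))/2) := by
              apply mul_le_mul hSD (Real.exp_le_exp.mpr (by linarith)) (Real.exp_pos _).le
                (Real.exp_pos _).le
            refine e1.trans ?_
            rw [← Real.exp_add]
            apply Real.exp_le_exp.mpr
            have hsq : (x-μ)^2 ≤ D + (1+2*μ) := by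
              nlinarith [hD1, mul_nonneg (by linarith : (0:ℝ) ≤ 1+x)
                (by linarith : (0:ℝ) ≤ 1+2*μ-x)]
            have hmul := mul_le_mul_of_nonneg_left hsq hθ0.le
            linarith
          rw [hgform x]
          calc S * (Real.exp (-1) * Real.exp (x - Real.exp x))
              = (S * Real.exp (-1)) * Real.exp (x - Real.exp x) := by ring
            _ ≤ Real.exp (-(θ*(x-μ)^2)/2) * Real.exp (x - Real.exp x) :=
                mul_le_mul_of_nonneg_right h1 (Real.exp_pos _).le
        have hptR : ∀ x ∈ Set.Icc (0:ℝ) 1, S * Real.exp (x - Real.exp x) ≤ g x := by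
          intro x hx
          have h1 : S ≤ Real.exp (-(θ*(x-μ)^2)/2) := by
            refine hSD.trans (Real.exp_le_exp.mpr ?_)
            have hmul := mul_le_mul_of_nonneg_left (hDx x hx) hθ0.le
            linarith
          rw [hgform x]
          exact mul_le_mul_of_nonneg_right h1 (Real.exp_pos _).le
        have hIL : (∫ x in (-1:ℝ)..0, Real.exp (x - Real.exp x)) =
            Real.exp (-Real.exp (-1)) - Real.exp (-1) := by
          rw [aux_integral_exp_sub_exp, Real.exp_zero]
        have hIR : (∫ x in (0:ℝ)..1, Real.exp (x - Real.exp x)) =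
            Real.exp (-1) - Real.exp (-Real.exp 1) := by
          rw [aux_integral_exp_sub_exp, Real.exp_zero]
        calc Real.exp (-1) * S * G
            ≤ S * (Real.exp (-1) * (Real.exp (-Real.exp (-1)) - Real.exp (-1))
                + (Real.exp (-1) - Real.exp (-Real.exp 1))) := by
              have hnum : Real.exp (-1) * (103/120) ≤
                  Real.exp (-1) * (Real.exp (-Real.exp (-1)) - Real.exp (-1))
                  + (Real.exp (-1) - Real.exp (-Real.exp 1)) := by
                have hA : (0.2642411:ℝ) ≤ Real.exp (-Real.exp (-1)) - Real.exp (-1) := by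
                  linarith [numExpNegEinv_lo, numEinv_hi]
                have hprod : (0.36787944:ℝ) * 0.2642411 ≤
                    Real.exp (-1) * (Real.exp (-Real.exp (-1)) - Real.exp (-1)) :=
                  mul_le_mul numEinv_lo hA (by norm_num) (Real.exp_pos _).le
                linarith [numEinv_lo, numEinv_hi, numExpNegE_hi, hprod]
              have h0 : Real.exp (-1) * S * G ≤ Real.exp (-1) * S * (103/120) := by
                apply mul_le_mul_of_nonneg_left hGle (mul_nonneg (Real.exp_pos _).le hS0)
              calc Real.exp (-1) * S * G ≤ Real.exp (-1) * S * (103/120) := h0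
                _ = S * (Real.exp (-1) * (103/120)) := by ring
                _ ≤ S * (Real.exp (-1) * (Real.exp (-Real.exp (-1)) - Real.exp (-1))
                    + (Real.exp (-1) - Real.exp (-Real.exp 1))) :=
                    mul_le_mul_of_nonneg_left hnum hS0
          _ = (∫ x in (-1:ℝ)..0, S * (Real.exp (-1) * Real.exp (x - Real.exp x)))
              + (∫ x in (0:ℝ)..1, S * Real.exp (x - Real.exp x)) := by
              simp only [intervalIntegral.integral_const_mul]
              rw [hIL, hIR]
              ring
          _ ≤ (∫ x in (-1:ℝ)..0, g x) + (∫ x in (0:ℝ)..1, g x) := by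
              apply add_le_add
              · apply intervalIntegral.integral_mono_on (by norm_num)
                  (Continuous.intervalIntegrable (by fun_prop) _ _)
                  (Continuous.intervalIntegrable hg_cont _ _) hptL
              · apply intervalIntegral.integral_mono_on (by norm_num)
                  (Continuous.intervalIntegrable (by fun_prop) _ _)
                  (Continuous.intervalIntegrable hg_cont _ _) hptR
          _ = ∫ x in (-1:ℝ)..1, g x :=
              intervalIntegral.integral_add_adjacent_intervals
                (Continuous.intervalIntegrable hg_cont _ _)
                (Continuous.intervalIntegrable hg_cont _ _)
          _ ≤ f1 1 θ μ := key _ _ (by norm_num)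
      · -- branch B : θ(1+2μ) > 2, use the tilted bound on [0, 1]
        set ch : ℝ := Real.exp (1/2 - Real.exp (1/2)) with hchdef
        set c1 : ℝ := Real.exp (1 - Real.exp 1) with hc1def
        have hpt : ∀ x ∈ Set.Icc (0:ℝ) 1,
            S * ((1 + x*(1-x)/2) * Real.exp (x - Real.exp x)) ≤ g x := by
          intro x hx
          obtain ⟨hx1, hx2⟩ := hx
          have hDx' : (x-μ)^2 ≤ D := hDx x ⟨hx1, hx2⟩
          have hxq : (0:ℝ) ≤ x*(1-x) := mul_nonneg hx1 (by linarith)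
          have hpoly : (1+2*μ) * (x*(1-x)) ≤ 2*(D - (x-μ)^2) := by
            rcases le_total μ (1/2) with hμh | hμh
            · have hD2 : (1-μ)^2 ≤ D := le_max_right _ _
              have t1 : (0:ℝ) ≤ x*(1-2*μ) := mul_nonneg hx1 (by linarith)
              have t2 : (0:ℝ) ≤ (1-x)*(2-4*μ+x*(1-2*μ)) :=
                mul_nonneg (by linarith) (by linarith)
              nlinarith [hD2, t2]
            · have t3 : (0:ℝ) ≤ (x*(2*μ-1))*(1+x) :=
                mul_nonneg (mul_nonneg hx1 (by linarith)) (by linarith)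
              nlinarith [hD1, t3]
          have hq : 1 + x*(1-x)/2 ≤ Real.exp (θ*(D - (x-μ)^2)/2) := by
            have h1 : x*(1-x)/2 ≤ θ*(1+2*μ)*(x*(1-x))/4 := by
              nlinarith [mul_nonneg (by linarith : (0:ℝ) ≤ θ*(1+2*μ)-2) hxq]
            have h2 : θ*(1+2*μ)*(x*(1-x))/4 ≤ θ*(D - (x-μ)^2)/2 := by
              have := mul_le_mul_of_nonneg_left hpoly (by positivity : (0:ℝ) ≤ θ/4)
              linarith
            have h3 := Real.add_one_le_exp (θ*(D - (x-μ)^2)/2)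
            linarith
          have h1 : S * (1 + x*(1-x)/2) ≤ Real.exp (-(θ*(x-μ)^2)/2) := by
            calc S * (1 + x*(1-x)/2)
                ≤ Real.exp (-(θ*D)/2) * Real.exp (θ*(D - (x-μ)^2)/2) := by
                  apply mul_le_mul hSD hq (by linarith [hxq]) (Real.exp_pos _).le
              _ = Real.exp (-(θ*(x-μ)^2)/2) := by
                  rw [← Real.exp_add]; congr 1; ring
          rw [hgform x]
          calc S * ((1 + x*(1-x)/2) * Real.exp (x - Real.exp x))
              = (S * (1 + x*(1-x)/2)) * Real.exp (x - Real.exp x) := by ring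
            _ ≤ Real.exp (-(θ*(x-μ)^2)/2) * Real.exp (x - Real.exp x) :=
                mul_le_mul_of_nonneg_right h1 (Real.exp_pos _).le
        have hint_q : ∀ (cc : ℝ) (a b : ℝ), IntervalIntegrable (fun x : ℝ => x*(1-x)/2 * cc)
            MeasureTheory.volume a b := fun cc a b =>
          Continuous.intervalIntegrable (by fun_prop) _ _
        have hIq : ∀ a b : ℝ, (∫ x in a..b, x*(1-x)/2) =
            (b^2/4 - b^3/6) - (a^2/4 - a^3/6) := by
          intro a b
          have hqd : ∀ t:ℝ, HasDerivAt (fun s : ℝ => s^2/4 - s^3/6) (t*(1-t)/2) t := by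
            intro t
            have h1 := ((hasDerivAt_pow 2 t).div_const 4).sub ((hasDerivAt_pow 3 t).div_const 6)
            exact h1.congr_deriv (by push_cast; ring)
          rw [intervalIntegral.integral_eq_sub_of_hasDerivAt (fun t _ => hqd t)
            (Continuous.intervalIntegrable (by fun_prop) _ _)]
        have hpiece : ∀ (a b cc : ℝ),
            (∫ x in a..b, (Real.exp (x - Real.exp x) + x*(1-x)/2 * cc)) =
            (Real.exp (-Real.exp a) - Real.exp (-Real.exp b))
              + ((b^2/4 - b^3/6) - (a^2/4 - a^3/6)) * cc := by
          intro a b cc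
          rw [intervalIntegral.integral_add (hint_h a b) (hint_q cc a b),
            aux_integral_exp_sub_exp, intervalIntegral.integral_mul_const, hIq]
        have hpt1 : ∀ x ∈ Set.Icc (0:ℝ) (1/2),
            S * (Real.exp (x - Real.exp x) + x*(1-x)/2 * ch) ≤ g x := by
          intro x hx
          obtain ⟨hx1, hx2⟩ := hx
          refine le_trans ?_ (hpt x ⟨hx1, by linarith⟩)
          apply mul_le_mul_of_nonneg_left _ hS0
          have hxe : ch ≤ Real.exp (x - Real.exp x) :=
            Real.exp_le_exp.mpr (aux_sub_exp_antitone hx1 hx2)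
          nlinarith [mul_nonneg (mul_nonneg hx1 (by linarith : (0:ℝ) ≤ 1-x))
            (sub_nonneg.mpr hxe)]
        have hpt2 : ∀ x ∈ Set.Icc (1/2:ℝ) 1,
            S * (Real.exp (x - Real.exp x) + x*(1-x)/2 * c1) ≤ g x := by
          intro x hx
          obtain ⟨hx1, hx2⟩ := hx
          refine le_trans ?_ (hpt x ⟨by linarith, hx2⟩)
          apply mul_le_mul_of_nonneg_left _ hS0
          have hxe : c1 ≤ Real.exp (x - Real.exp x) :=
            Real.exp_le_exp.mpr (aux_sub_exp_antitone (by linarith) hx2)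
          nlinarith [mul_nonneg (mul_nonneg (by linarith : (0:ℝ) ≤ x)
            (by linarith : (0:ℝ) ≤ 1-x)) (sub_nonneg.mpr hxe)]
        calc Real.exp (-1) * S * G
            ≤ S * (((Real.exp (-Real.exp 0) - Real.exp (-Real.exp (1/2)))
                  + (((1/2:ℝ)^2/4 - (1/2:ℝ)^3/6) - ((0:ℝ)^2/4 - (0:ℝ)^3/6)) * ch)
                + ((Real.exp (-Real.exp (1/2)) - Real.exp (-Real.exp 1))
                  + (((1:ℝ)^2/4 - (1:ℝ)^3/6) - ((1/2:ℝ)^2/4 - (1/2:ℝ)^3/6)) * c1)) := by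
              have hch : (0.3131:ℝ) ≤ ch := by rw [hchdef]; exact numGhalf_lo
              have hc1 : (0.1757:ℝ) ≤ c1 := by rw [hc1def]; exact numG1_lo
              have hnum : Real.exp (-1) * (103/120) ≤
                  (Real.exp (-1) - Real.exp (-Real.exp 1)) + (1/24) * ch + (1/24) * c1 := by
                linarith [numEinv_lo, numEinv_hi, numExpNegE_hi, hch, hc1]
              have h0 : Real.exp (-1) * S * G ≤ Real.exp (-1) * S * (103/120) := by
                apply mul_le_mul_of_nonneg_left hGle (mul_nonneg (Real.exp_pos _).le hS0)
              calc Real.exp (-1) * S * G ≤ Real.exp (-1) * S * (103/120) := h0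
                _ = S * (Real.exp (-1) * (103/120)) := by ring
                _ ≤ S * ((Real.exp (-1) - Real.exp (-Real.exp 1)) + (1/24) * ch + (1/24) * c1) :=
                    mul_le_mul_of_nonneg_left hnum hS0
                _ = S * (((Real.exp (-Real.exp 0) - Real.exp (-Real.exp (1/2)))
                      + (((1/2:ℝ)^2/4 - (1/2:ℝ)^3/6) - ((0:ℝ)^2/4 - (0:ℝ)^3/6)) * ch)
                    + ((Real.exp (-Real.exp (1/2)) - Real.exp (-Real.exp 1))
                      + (((1:ℝ)^2/4 - (1:ℝ)^3/6) - ((1/2:ℝ)^2/4 - (1/2:ℝ)^3/6)) * c1)) := by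
                    rw [Real.exp_zero]
                    ring
          _ = (∫ x in (0:ℝ)..(1/2), S * (Real.exp (x - Real.exp x) + x*(1-x)/2 * ch))
              + (∫ x in (1/2:ℝ)..1, S * (Real.exp (x - Real.exp x) + x*(1-x)/2 * c1)) := by
              simp only [intervalIntegral.integral_const_mul]
              rw [hpiece 0 (1/2) ch, hpiece (1/2) 1 c1]
              ring
          _ ≤ (∫ x in (0:ℝ)..(1/2), g x) + (∫ x in (1/2:ℝ)..1, g x) := by
              apply add_le_add
              · apply intervalIntegral.integral_mono_on (by norm_num)
                  (Continuous.intervalIntegrable (by fun_prop) _ _)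
                  (Continuous.intervalIntegrable hg_cont _ _) hpt1
              · apply intervalIntegral.integral_mono_on (by norm_num)
                  (Continuous.intervalIntegrable (by fun_prop) _ _)
                  (Continuous.intervalIntegrable hg_cont _ _) hpt2
          _ = ∫ x in (0:ℝ)..1, g x :=
              intervalIntegral.integral_add_adjacent_intervals
                (Continuous.intervalIntegrable hg_cont _ _)
                (Continuous.intervalIntegrable hg_cont _ _)
          _ ≤ f1 1 θ μ := key _ _ (by norm_num)
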